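/- If P = P₁ w v P₂ is a valid pressing path of a black-and-white graph G and the vertices w and v are not adjacent in the graph G·P₁ (the graph obtained after pressing P₁), then P' = P₁ v w P₂ is also a valid pressing path of G, and G·P = G·P'. Moreover, if P is successful then so is P'. -/

import Mathlib

structure BW (V : Type) where
  adj : V → V → Bool
  black : V → Bool
  symm : ∀ u w, adj u w = adj w u
  irrefl : ∀ v, adj v v = false

variable {V : Type} [DecidableEq V]

/-- Pressing a vertex `v`: neighbors toggle color, pairs of neighbors toggle
adjacency, and `v` becomes white and isolated. -/
def press (G : BW V) (v : V) : BW V where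
  adj u w :=
    if u = v ∨ w = v ∨ u = w then false
    else xor (G.adj u w) (G.adj u v && G.adj w v)
  black u := if u = v then false else xor (G.black u) (G.adj u v)
  symm := by
    intro u w
    by_cases h1 : u = v <;> by_cases h2 : w = v <;> by_cases h3 : u = w <;>
      simp_all [G.symm u w, Bool.xor_comm, Bool.and_comm] <;> tauto
  irrefl := by intro u; simp

/-- The graph obtained after pressing the vertices of a list in order. -/
def pressPath (G : BW V) : List V → BW V
  | [] => G
  | v :: P => pressPath (press G v) P

/-- A pressing path is valid if every vertex is black when it is pressed. -/
def ValidPath (G : BW V) : List V → Prop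
  | [] => True
  | v :: P => G.black v = true ∧ ValidPath (press G v) P

/-- The all-white, edgeless graph. -/
def AllWhiteEmpty (G : BW V) : Prop :=
  (∀ v, G.black v = false) ∧ ∀ u w, G.adj u w = false

/-- A successful pressing path: valid and leading to the all-white empty graph. -/
def Successful (G : BW V) (P : List V) : Prop :=
  ValidPath G P ∧ AllWhiteEmpty (pressPath G P)

/-- The underlying simple graph of a black-and-white graph. -/
def BW.toSimple (G : BW V) : SimpleGraph V where
  Adj u w := G.adj u w = true
  symm := ⟨fun u w h => (G.symm w u).trans h⟩
  loopless := ⟨fun v h => by simp [G.irrefl] at h⟩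

/-- `l` enumerates the vertices as a path: `G` is linear with vertex order `l`. -/
def IsPathList (G : BW V) (l : List V) : Prop :=
  l.Nodup ∧ (∀ v, v ∈ l) ∧
    ∀ u w, G.adj u w = true ↔ ∃ i,
      (l[i]? = some u ∧ l[i+1]? = some w) ∨ (l[i]? = some w ∧ l[i+1]? = some u)

/-- A linear (path) black-and-white graph. -/
def IsLinear (G : BW V) : Prop := ∃ l, IsPathList G l

/-- Adjacency step in the metagraph of successful pressing paths:
their longest common subsequence misses at most 2 presses. -/
def Step (G : BW V) (P Q : List V) : Prop :=
  Successful G P ∧ Successful G Q ∧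
    ∃ R : List V, R.Sublist P ∧ R.Sublist Q ∧ P.length ≤ R.length + 2

/-- Transposition of two consecutive presses which are non-adjacent at that moment. -/
def SwapStep (G : BW V) (P Q : List V) : Prop :=
  ∃ A u w B, P = A ++ u :: w :: B ∧ Q = A ++ w :: u :: B ∧
    (pressPath G A).adj u w = false

/-- The induced black-and-white graph on a subset of the vertices. -/
def BW.restrict (G : BW V) (p : V → Prop) [DecidablePred p] : BW {u // p u} where
  adj u w := G.adj u.1 w.1
  black u := G.black u.1
  symm := fun u w => G.symm u.1 w.1
  irrefl := fun u => G.irrefl u.1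

/-- The all-black path graph on `n` vertices. -/
def pathAllBlack (n : ℕ) : BW (Fin n) where
  adj i j := decide (i.1 + 1 = j.1 ∨ j.1 + 1 = i.1)
  black _ := true
  symm := by intro u w; simp [or_comm]
  irrefl := by intro v; simp

lemma BW.ext' {G H : BW V} (ha : G.adj = H.adj) (hb : G.black = H.black) : G = H := by
  cases G; cases H; simp_all

lemma press_comm (G : BW V) {w v : V} (h : G.adj w v = false) :
    press (press G w) v = press (press G v) w := by
  have h' : G.adj v w = false := (G.symm v w).trans h
  by_cases hvw : v = w
  · subst hvw; rfl
  have hwv : ¬ w = v := fun e => hvw e.symm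
  apply BW.ext'
  · funext u x
    by_cases h1 : u = v <;> by_cases h2 : x = v <;> by_cases h3 : u = w <;>
      by_cases h4 : x = w <;> by_cases h5 : u = x <;>
      simp_all [press, Bool.xor_assoc, Bool.xor_comm, Bool.xor_left_comm]
  · funext u
    by_cases h1 : u = v <;> by_cases h2 : u = w <;>
      simp_all [press, Bool.xor_assoc, Bool.xor_comm, Bool.xor_left_comm]

lemma pressPath_append (G : BW V) (A B : List V) :
    pressPath G (A ++ B) = pressPath (pressPath G A) B := by
  induction A generalizing G with
  | nil => rfl
  | cons a A ih => simp [pressPath, ih]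

lemma validPath_append (G : BW V) (A B : List V) :
    ValidPath G (A ++ B) ↔ ValidPath G A ∧ ValidPath (pressPath G A) B := by
  induction A generalizing G with
  | nil => simp [ValidPath, pressPath]
  | cons a A ih => simp [ValidPath, pressPath, ih, and_assoc]

/-- Swapping two consecutive presses of vertices that are non-adjacent at that
moment preserves validity, the resulting graph, and success. -/
theorem stmt4 {V : Type} [DecidableEq V] (G : BW V) (P₁ P₂ : List V) (w v : V)
    (hvalid : ValidPath G (P₁ ++ w :: v :: P₂))
    (hna : (pressPath G P₁).adj w v = false) :
    ValidPath G (P₁ ++ v :: w :: P₂) ∧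
    pressPath G (P₁ ++ v :: w :: P₂) = pressPath G (P₁ ++ w :: v :: P₂) ∧
    (Successful G (P₁ ++ w :: v :: P₂) → Successful G (P₁ ++ v :: w :: P₂)) := by
  set H := pressPath G P₁ with hH
  rw [validPath_append] at hvalid
  obtain ⟨hv1, hw, hv2⟩ := hvalid
  obtain ⟨hvb, hrest⟩ := hv2
  rw [← hH] at hw hvb hrest
  -- hw : H.black w = true; hvb : (press H w).black v = true
  have h' : H.adj v w = false := (H.symm v w).trans hna
  have hne : v ≠ w := by
    intro e; subst e; simp [press] at hvb
  have hvblack : H.black v = true := by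
    have := hvb
    simp only [press] at this
    rw [if_neg hne, h'] at this
    simpa using this
  have hwblack : (press H v).black w = true := by
    simp [press, hne.symm, hna, hw]
  have hcomm : press (press H v) w = press (press H w) v := press_comm H h'
  have heq : pressPath G (P₁ ++ v :: w :: P₂) = pressPath G (P₁ ++ w :: v :: P₂) := by
    rw [pressPath_append, pressPath_append]
    show pressPath H (v :: w :: P₂) = pressPath H (w :: v :: P₂)
    simp only [pressPath]
    rw [hcomm]
  have hvalid' : ValidPath G (P₁ ++ v :: w :: P₂) := by
    rw [validPath_append]
    refine ⟨hv1, hvblack, hwblack, ?_⟩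
    rw [hcomm]; exact hrest
  refine ⟨hvalid', heq, fun hs => ?_⟩
  obtain ⟨_, hend⟩ := hs
  exact ⟨hvalid', heq ▸ hend⟩
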